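/- Let H be a polarizer in ℝ^N with reflection x ↦ x_H. For any two measurable functions u, v : ℝ^N → ℝ and any x ∈ ℝ^N, the pair (u^H(x), u^H(x_H)) is a rearrangement of the pair (u(x), u(x_H)), and consequently |u^H(x) − v^H(x)| + |u^H(x_H) − v^H(x_H)| ≤ |u(x) − v(x)| + |u(x_H) − v(x_H)| for nonnegative u, v. In particular, for nonnegative u, v ∈ L^p(ℝ^N) with 1 ≤ p < ∞, one has ‖u^H − v^H‖_{L^p} ≤ ‖u − v‖_{L^p}. -/

import Mathlib

open MeasureTheory
open scoped ENNReal
open scoped NNReal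

noncomputable def reflectH {N : ℕ} (α : EuclideanSpace ℝ (Fin N)) (β : ℝ)
    (x : EuclideanSpace ℝ (Fin N)) : EuclideanSpace ℝ (Fin N) :=
  x - (2 * ((inner ℝ x α : ℝ) - β)) • α

noncomputable def polarize {N : ℕ} (α : EuclideanSpace ℝ (Fin N)) (β : ℝ)
    (u : EuclideanSpace ℝ (Fin N) → ℝ) (x : EuclideanSpace ℝ (Fin N)) : ℝ :=
  if (inner ℝ x α : ℝ) ≤ β then max (u x) (u (reflectH α β x))
  else min (u x) (u (reflectH α β x))

section Aux

variable {N : ℕ} {α : EuclideanSpace ℝ (Fin N)} {β : ℝ}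

lemma inner_self_one (hα : ‖α‖ = 1) : (inner ℝ α α : ℝ) = 1 := by
  rw [real_inner_self_eq_norm_mul_norm, hα]; norm_num

lemma inner_reflectH (hα : ‖α‖ = 1) (x : EuclideanSpace ℝ (Fin N)) :
    (inner ℝ (reflectH α β x) α : ℝ) = 2 * β - inner ℝ x α := by
  unfold reflectH
  rw [inner_sub_left, real_inner_smul_left, inner_self_one hα]
  ring

lemma reflectH_invol (hα : ‖α‖ = 1) (x : EuclideanSpace ℝ (Fin N)) :
    reflectH α β (reflectH α β x) = x := by
  have h2 := inner_reflectH (β := β) hα x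
  conv_lhs => rw [reflectH]
  rw [h2]
  rw [reflectH, sub_sub, ← add_smul]
  have : 2 * ((inner ℝ x α : ℝ) - β) + 2 * (2 * β - (inner ℝ x α : ℝ) - β) = 0 := by ring
  rw [this, zero_smul, sub_zero]

lemma reflectH_fixed (x : EuclideanSpace ℝ (Fin N)) (h : (inner ℝ x α : ℝ) = β) :
    reflectH α β x = x := by
  simp [reflectH, h]

lemma continuous_reflectH : Continuous (reflectH α β) := by
  unfold reflectH
  fun_prop

lemma continuous_innerα : Continuous (fun x : EuclideanSpace ℝ (Fin N) => (inner ℝ x α : ℝ)) :=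
  continuous_id.inner continuous_const

lemma measurable_polarize {u : EuclideanSpace ℝ (Fin N) → ℝ} (hm : Measurable u) :
    Measurable (polarize α β u) := by
  unfold polarize
  exact Measurable.ite (measurableSet_le continuous_innerα.measurable measurable_const)
    (hm.max (hm.comp continuous_reflectH.measurable))
    (hm.min (hm.comp continuous_reflectH.measurable))

/-- The combined max/min structure of polarization at `x` and its reflection,
uniformly in the function `w`. -/
lemma pol_pair (hα : ‖α‖ = 1) (x : EuclideanSpace ℝ (Fin N)) :
    (∀ w : EuclideanSpace ℝ (Fin N) → ℝ,
        polarize α β w x = max (w x) (w (reflectH α β x)) ∧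
        polarize α β w (reflectH α β x) = min (w (reflectH α β x)) (w x)) ∨
    (∀ w : EuclideanSpace ℝ (Fin N) → ℝ,
        polarize α β w x = min (w x) (w (reflectH α β x)) ∧
        polarize α β w (reflectH α β x) = max (w (reflectH α β x)) (w x)) := by
  set y := reflectH α β x with hy
  have hyx : reflectH α β y = x := reflectH_invol hα x
  have hiy : (inner ℝ y α : ℝ) = 2 * β - inner ℝ x α := inner_reflectH hα x
  by_cases h : (inner ℝ x α : ℝ) ≤ β
  · left
    intro w
    constructor
    · rw [polarize, if_pos h]
    · by_cases h2 : (inner ℝ y α : ℝ) ≤ β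
      · -- then inner ℝ x α = β, so y = x
        have hxb : (inner ℝ x α : ℝ) = β := by rw [hiy] at h2; linarith
        have hxy : y = x := by rw [hy, reflectH_fixed x hxb]
        rw [polarize, hxy, if_pos (le_of_eq hxb), reflectH_fixed x hxb]
        simp
      · rw [polarize, if_neg h2, hyx]
  · right
    intro w
    constructor
    · rw [polarize, if_neg h]
    · have h2 : (inner ℝ y α : ℝ) ≤ β := by rw [hiy]; push_neg at h; linarith
      rw [polarize, if_pos h2, hyx]

/-- Two-point rearrangement inequality (p = 1 case). -/
lemma key4 (a b c d : ℝ) :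
    |max a b - max c d| + |min a b - min c d| ≤ |a - c| + |b - d| := by
  rcases le_total a b with hab | hab <;> rcases le_total c d with hcd | hcd
  · rw [max_eq_right hab, min_eq_left hab, max_eq_right hcd, min_eq_left hcd]
    linarith [abs_nonneg (b - d), abs_nonneg (a - c)]
  · rw [max_eq_right hab, min_eq_left hab, max_eq_left hcd, min_eq_right hcd]
    rcases abs_cases (b - c) with ⟨h1, _⟩ | ⟨h1, _⟩ <;>
      rcases abs_cases (a - d) with ⟨h2, _⟩ | ⟨h2, _⟩ <;>
      linarith [le_abs_self (a - c), neg_abs_le (a - c), le_abs_self (b - d), neg_abs_le (b - d)]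
  · rw [max_eq_left hab, min_eq_right hab, max_eq_right hcd, min_eq_left hcd]
    rcases abs_cases (a - d) with ⟨h1, _⟩ | ⟨h1, _⟩ <;>
      rcases abs_cases (b - c) with ⟨h2, _⟩ | ⟨h2, _⟩ <;>
      linarith [le_abs_self (a - c), neg_abs_le (a - c), le_abs_self (b - d), neg_abs_le (b - d)]
  · rw [max_eq_left hab, min_eq_right hab, max_eq_left hcd, min_eq_right hcd]

lemma rpow_subadd {a b r : ℝ} (ha : 0 ≤ a) (hb : 0 ≤ b) (hr : 1 ≤ r) :
    a ^ r + b ^ r ≤ (a + b) ^ r := by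
  have h := NNReal.coe_le_coe.mpr (NNReal.add_rpow_le_rpow_add a.toNNReal b.toNNReal hr)
  rw [NNReal.coe_add, NNReal.coe_rpow, NNReal.coe_rpow, NNReal.coe_rpow, NNReal.coe_add,
    Real.coe_toNNReal a ha, Real.coe_toNNReal b hb] at h
  exact h

/-- Spreading a pair apart increases the sum of `r`-th powers (convexity). -/
lemma convex_pair {a x t r : ℝ} (ha : 0 ≤ a) (hax : a ≤ x) (hxt : x ≤ t) (hr : 1 ≤ r) :
    x ^ r + (a + t - x) ^ r ≤ a ^ r + t ^ r := by
  rcases eq_or_lt_of_le (le_trans hax hxt) with he | hlt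
  · have hxa : x = a := le_antisymm (he ▸ hxt) hax
    rw [hxa]
    have : a + t - a = t := by ring
    rw [this]
  · have hd : 0 < t - a := by linarith
    have hl0 : 0 ≤ (t - x) / (t - a) := div_nonneg (by linarith) hd.le
    have hl1 : (t - x) / (t - a) ≤ 1 := by rw [div_le_one hd]; linarith
    have ht0 : (0:ℝ) ≤ t := le_trans ha (le_trans hax hxt)
    have hcvx := convexOn_rpow hr
    have h1 := hcvx.2 (Set.mem_Ici.mpr ha) (Set.mem_Ici.mpr ht0) hl0
      (by linarith : (0:ℝ) ≤ 1 - (t - x) / (t - a)) (by ring)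
    have h2 := hcvx.2 (Set.mem_Ici.mpr ha) (Set.mem_Ici.mpr ht0)
      (by linarith : (0:ℝ) ≤ 1 - (t - x) / (t - a)) hl0 (by ring)
    simp only [smul_eq_mul] at h1 h2
    have key1 : (t - x) / (t - a) * a + (1 - (t - x) / (t - a)) * t = x := by
      field_simp
      ring
    have key2 : (1 - (t - x) / (t - a)) * a + (t - x) / (t - a) * t = a + t - x := by
      field_simp
      ring
    rw [key1] at h1
    rw [key2] at h2
    linarith

/-- Core majorization: if `x, y ≤ t`, `x + y ≤ s + t`, all nonneg, `1 ≤ r`,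
then `x^r + y^r ≤ s^r + t^r`. -/
lemma maj_core {x y s t r : ℝ} (hx : 0 ≤ x) (hy : 0 ≤ y) (hs : 0 ≤ s)
    (hxt : x ≤ t) (hyt : y ≤ t) (hsum : x + y ≤ s + t) (hr : 1 ≤ r) :
    x ^ r + y ^ r ≤ s ^ r + t ^ r := by
  have ht : 0 ≤ t := le_trans hx hxt
  by_cases hcase : x + y ≤ t
  · calc x ^ r + y ^ r ≤ (x + y) ^ r := rpow_subadd hx hy hr
      _ ≤ t ^ r := Real.rpow_le_rpow (add_nonneg hx hy) hcase (le_trans zero_le_one hr)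
      _ ≤ s ^ r + t ^ r := le_add_of_nonneg_left (Real.rpow_nonneg hs r)
  · push_neg at hcase
    have hx'0 : 0 ≤ x + y - t := by linarith
    have h1 := convex_pair hx'0 (by linarith : x + y - t ≤ x) hxt hr
    have hyeq : x + y - t + t - x = y := by ring
    rw [hyeq] at h1
    have h2 : (x + y - t) ^ r ≤ s ^ r :=
      Real.rpow_le_rpow hx'0 (by linarith) (le_trans zero_le_one hr)
    linarith

/-- Majorization with `max` bound. -/
lemma maj {x y s t r : ℝ} (hx : 0 ≤ x) (hy : 0 ≤ y) (hs : 0 ≤ s) (ht : 0 ≤ t)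
    (hxm : x ≤ max s t) (hym : y ≤ max s t) (hsum : x + y ≤ s + t) (hr : 1 ≤ r) :
    x ^ r + y ^ r ≤ s ^ r + t ^ r := by
  rcases le_total s t with hst | hst
  · rw [max_eq_right hst] at hxm hym
    exact maj_core hx hy hs hxm hym hsum hr
  · rw [max_eq_left hst] at hxm hym
    have := maj_core hx hy ht hxm hym (by linarith) hr
    linarith

/-- Two-point rearrangement inequality, `p`-th power version. -/
lemma keyP (a b c d : ℝ) {r : ℝ} (hr : 1 ≤ r) :
    |max a b - max c d| ^ r + |min a b - min c d| ^ r ≤ |a - c| ^ r + |b - d| ^ r :=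
  maj (abs_nonneg _) (abs_nonneg _) (abs_nonneg _) (abs_nonneg _)
    (abs_max_sub_max_le_max a b c d) (abs_min_sub_min_le_max a b c d) (key4 a b c d) hr

end Aux

/-- pointwise, `(u^H(x), u^H(x_H))` is a rearrangement of `(u(x), u(x_H))`;
for nonnegative `u, v` the two-point `L¹` contraction holds, and consequently
polarization is nonexpansive in `L^p`: `‖u^H − v^H‖_p ≤ ‖u − v‖_p`. -/
theorem stmt4 {N : ℕ} (α : EuclideanSpace ℝ (Fin N)) (β : ℝ) (hα : ‖α‖ = 1)
    (u v : EuclideanSpace ℝ (Fin N) → ℝ) (hmu : Measurable u) (hmv : Measurable v)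
    (hu : ∀ x, 0 ≤ u x) (hv : ∀ x, 0 ≤ v x)
    (p : ℝ≥0∞) (hp : 1 ≤ p) (hp' : p ≠ ⊤) :
    (∀ x, (polarize α β u x = u x ∧
            polarize α β u (reflectH α β x) = u (reflectH α β x)) ∨
          (polarize α β u x = u (reflectH α β x) ∧
            polarize α β u (reflectH α β x) = u x)) ∧
    (∀ x, |polarize α β u x - polarize α β v x| +
            |polarize α β u (reflectH α β x) - polarize α β v (reflectH α β x)| ≤
          |u x - v x| + |u (reflectH α β x) - v (reflectH α β x)|) ∧
    eLpNorm (fun x => polarize α β u x - polarize α β v x) p volume ≤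
      eLpNorm (fun x => u x - v x) p volume := by
  have part1 : ∀ x, (polarize α β u x = u x ∧
      polarize α β u (reflectH α β x) = u (reflectH α β x)) ∨
      (polarize α β u x = u (reflectH α β x) ∧
      polarize α β u (reflectH α β x) = u x) := by
    intro x
    rcases pol_pair (β := β) hα x with h | h
    · obtain ⟨h1, h2⟩ := h u
      rcases le_total (u (reflectH α β x)) (u x) with hc | hc
      · left
        exact ⟨by rw [h1, max_eq_left hc], by rw [h2, min_eq_left hc]⟩
      · right
        exact ⟨by rw [h1, max_eq_right hc], by rw [h2, min_eq_right hc]⟩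
    · obtain ⟨h1, h2⟩ := h u
      rcases le_total (u x) (u (reflectH α β x)) with hc | hc
      · left
        exact ⟨by rw [h1, min_eq_left hc], by rw [h2, max_eq_left hc]⟩
      · right
        exact ⟨by rw [h1, min_eq_right hc], by rw [h2, max_eq_right hc]⟩
  have part2r : ∀ (r : ℝ), 1 ≤ r → ∀ x,
      |polarize α β u x - polarize α β v x| ^ r +
        |polarize α β u (reflectH α β x) - polarize α β v (reflectH α β x)| ^ r ≤
      |u x - v x| ^ r + |u (reflectH α β x) - v (reflectH α β x)| ^ r := by
    intro r hr x
    rcases pol_pair (β := β) hα x with h | h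
    · obtain ⟨hu1, hu2⟩ := h u
      obtain ⟨hv1, hv2⟩ := h v
      rw [hu1, hu2, hv1, hv2, min_comm (u (reflectH α β x)) (u x),
        min_comm (v (reflectH α β x)) (v x)]
      exact keyP _ _ _ _ hr
    · obtain ⟨hu1, hu2⟩ := h u
      obtain ⟨hv1, hv2⟩ := h v
      rw [hu1, hu2, hv1, hv2, max_comm (u (reflectH α β x)) (u x),
        max_comm (v (reflectH α β x)) (v x)]
      have := keyP (u x) (u (reflectH α β x)) (v x) (v (reflectH α β x)) hr
      linarith
  have part2 : ∀ x, |polarize α β u x - polarize α β v x| +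
      |polarize α β u (reflectH α β x) - polarize α β v (reflectH α β x)| ≤
      |u x - v x| + |u (reflectH α β x) - v (reflectH α β x)| := by
    intro x
    have := part2r 1 le_rfl x
    simpa using this
  refine ⟨part1, part2, ?_⟩
  -- L^p contraction
  have hp0 : p ≠ 0 := (lt_of_lt_of_le zero_lt_one hp).ne'
  set r : ℝ := p.toReal with hrdef
  have hr : 1 ≤ r := by
    rw [hrdef, ← ENNReal.toReal_one]
    exact ENNReal.toReal_mono hp' hp
  have hr0 : 0 < r := lt_of_lt_of_le zero_lt_one hr
  set T : EuclideanSpace ℝ (Fin N) → EuclideanSpace ℝ (Fin N) := reflectH α β with hT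
  -- T is measure preserving
  have hspan : ‖α‖ = 1 := hα
  have hmp : MeasurePreserving T volume volume := by
    have hαne : α ≠ 0 := by
      intro h0
      rw [h0, norm_zero] at hα
      exact one_ne_zero hα.symm
    have hR : ∀ x, (Submodule.reflection ((ℝ ∙ α)ᗮ)) x = x - (2 * (inner ℝ x α : ℝ)) • α := by
      intro x
      rw [Submodule.reflection_apply, Submodule.starProjection_orthogonal_val,
        Submodule.starProjection_unit_singleton ℝ hα]
      rw [real_inner_comm α x]
      rw [two_smul]
      rw [two_mul, add_smul]
      abel
    have hTe : T = (fun y => y + (2 * β) • α) ∘ (Submodule.reflection ((ℝ ∙ α)ᗮ)) := by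
      funext x
      simp only [Function.comp_apply, hR x, hT, reflectH]
      rw [mul_sub, sub_smul]
      abel
    rw [hTe]
    exact (measurePreserving_add_right volume _).comp
      (Submodule.reflection ((ℝ ∙ α)ᗮ)).measurePreserving
  have hTT : ∀ x, T (T x) = x := fun x => reflectH_invol hα x
  -- measurable ennreal integrands
  set f : EuclideanSpace ℝ (Fin N) → ℝ := fun x => polarize α β u x - polarize α β v x with hf
  set g : EuclideanSpace ℝ (Fin N) → ℝ := fun x => u x - v x with hg
  have hmf : Measurable f := (measurable_polarize hmu).sub (measurable_polarize hmv)
  have hmg : Measurable g := hmu.sub hmv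
  set Φ : EuclideanSpace ℝ (Fin N) → ℝ≥0∞ := fun x => (‖f x‖₊ : ℝ≥0∞) ^ r with hΦ
  set Ψ : EuclideanSpace ℝ (Fin N) → ℝ≥0∞ := fun x => (‖g x‖₊ : ℝ≥0∞) ^ r with hΨ
  have hmΦ : Measurable Φ := (hmf.enorm).pow_const _
  have hmΨ : Measurable Ψ := (hmg.enorm).pow_const _
  have hptwise : ∀ x, Φ x + Φ (T x) ≤ Ψ x + Ψ (T x) := by
    intro x
    have hreal := part2r r hr x
    have conv : ∀ a : ℝ, (‖a‖₊ : ℝ≥0∞) ^ r = ENNReal.ofReal (|a| ^ r) := by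
      intro a
      rw [← enorm_eq_nnnorm, Real.enorm_eq_ofReal_abs, ← ENNReal.ofReal_rpow_of_nonneg (abs_nonneg a)
        (le_of_lt hr0)]
    simp only [hΦ, hΨ, conv, hf, hg, hT]
    rw [← ENNReal.ofReal_add (Real.rpow_nonneg (abs_nonneg _) _)
      (Real.rpow_nonneg (abs_nonneg _) _),
      ← ENNReal.ofReal_add (Real.rpow_nonneg (abs_nonneg _) _)
      (Real.rpow_nonneg (abs_nonneg _) _)]
    exact ENNReal.ofReal_le_ofReal hreal
  have hint : ∫⁻ x, Φ x ≤ ∫⁻ x, Ψ x := by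
    have hΦT : ∫⁻ x, Φ (T x) = ∫⁻ x, Φ x := hmp.lintegral_comp hmΦ
    have hΨT : ∫⁻ x, Ψ (T x) = ∫⁻ x, Ψ x := hmp.lintegral_comp hmΨ
    have h2 : (2 : ℝ≥0∞) * ∫⁻ x, Φ x ≤ (2 : ℝ≥0∞) * ∫⁻ x, Ψ x := by
      calc (2 : ℝ≥0∞) * ∫⁻ x, Φ x = (∫⁻ x, Φ x) + ∫⁻ x, Φ (T x) := by
            rw [hΦT, two_mul]
        _ = ∫⁻ x, (Φ x + Φ (T x)) := (lintegral_add_left hmΦ _).symm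
        _ ≤ ∫⁻ x, (Ψ x + Ψ (T x)) := lintegral_mono hptwise
        _ = (∫⁻ x, Ψ x) + ∫⁻ x, Ψ (T x) := lintegral_add_left hmΨ _
        _ = (2 : ℝ≥0∞) * ∫⁻ x, Ψ x := by rw [hΨT, two_mul]
    exact (ENNReal.mul_le_mul_iff_right (by norm_num) (by norm_num)).mp h2
  rw [eLpNorm_eq_lintegral_rpow_enorm_toReal hp0 hp', eLpNorm_eq_lintegral_rpow_enorm_toReal hp0 hp']
  exact ENNReal.rpow_le_rpow hint (by positivity)
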